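/- Every isometry V on a Hilbert space H extends to a unitary: there exist a Hilbert space K, an isometric embedding J : H → K with H identified as an invariant subspace, and a unitary U on K such that U J = J V. -/

import Mathlib

open ContinuousLinearMap

universe u

local notation "⟪" x ", " y "⟫" => @inner ℂ _ _ x y

private lemma aux_inner {H : Type u} [NormedAddCommGroup H] [InnerProductSpace ℂ H]
    (V : H →L[ℂ] H) (hV : ∀ x : H, ‖V x‖ = ‖x‖) (x y : H) :
    ⟪V x, V y⟫ = ⟪x, y⟫ :=
  (⟨V.toLinearMap, hV⟩ : H →ₗᵢ[ℂ] H).inner_map_map x y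

private lemma aux_adj {H : Type u} [NormedAddCommGroup H] [InnerProductSpace ℂ H]
    [CompleteSpace H] (V : H →L[ℂ] H) (hV : ∀ x : H, ‖V x‖ = ‖x‖) (x : H) :
    adjoint V (V x) = x := by
  apply ext_inner_right ℂ
  intro y
  rw [adjoint_inner_left]
  exact aux_inner V hV x y

/-- Every isometry `V` on a Hilbert space `H` extends to a unitary: there exist a Hilbert
space `K`, an isometric embedding `J : H → K` (identifying `H` with an invariant subspace),
and a unitary `U` on `K` with `U J = J V`. -/
theorem stmt_13 {H : Type u} [NormedAddCommGroup H] [InnerProductSpace ℂ H] [CompleteSpace H]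
    (V : H →L[ℂ] H) (hV : ∀ x : H, ‖V x‖ = ‖x‖) :
    ∃ (K : Type u) (_ : NormedAddCommGroup K) (_ : InnerProductSpace ℂ K)
      (_ : CompleteSpace K) (J : H →L[ℂ] K) (U : K →L[ℂ] K),
      (∀ x : H, ‖J x‖ = ‖x‖) ∧
      (∀ y : K, ‖U y‖ = ‖y‖) ∧ Function.Surjective U ∧
      U ∘L J = J ∘L V := by
  classical
  set W := adjoint V with hW
  have hWV : ∀ x : H, W (V x) = x := aux_adj V hV
  -- the L² product
  refine ⟨WithLp 2 (H × H), inferInstance, inferInstance, inferInstance, ?_⟩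
  set e : WithLp 2 (H × H) ≃L[ℂ] H × H := WithLp.prodContinuousLinearEquiv 2 ℂ H H with he
  -- J
  set J : H →L[ℂ] WithLp 2 (H × H) :=
    e.symm.toContinuousLinearMap ∘L ContinuousLinearMap.inl ℂ H H with hJ
  -- the block map on H × H
  set P : H →L[ℂ] H := ContinuousLinearMap.id ℂ H - V ∘L W with hP
  set B : H × H →L[ℂ] H × H :=
    (V ∘L fst ℂ H H + P ∘L snd ℂ H H).prod (W ∘L snd ℂ H H) with hB
  set U : WithLp 2 (H × H) →L[ℂ] WithLp 2 (H × H) :=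
    e.symm.toContinuousLinearMap ∘L B ∘L e.toContinuousLinearMap with hU
  refine ⟨J, U, ?_, ?_, ?_, ?_⟩
  · intro x
    show ‖(WithLp.equiv 2 (H × H)).symm ((x : H), (0 : H))‖ = ‖x‖
    exact WithLp.norm_toLp_fst 2 H H x
  · -- operator identities
    have hPV : ∀ x : H, P (V x) = 0 := by
      intro x; simp [hP, hWV x]
    have hWP : ∀ x : H, W (P x) = 0 := by
      intro x; simp [hP, map_sub, hWV (W x)]
    have hPP : ∀ x : H, P (P x) = P x := by
      intro x; simp [hP, map_sub, hWV (W x)]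
    have hinnerWP : ∀ x y : H, ⟪V x, P y⟫ = 0 := by
      intro x y
      rw [← adjoint_inner_right]
      simp [← hW, hWP y]
    intro y
    have key : ⟪U y, U y⟫ = ⟪y, y⟫ := by
      have hUy : U y = (WithLp.equiv 2 (H × H)).symm
          (V y.fst + P y.snd, W y.snd) := rfl
      rw [hUy]
      rw [WithLp.prod_inner_apply, WithLp.prod_inner_apply]
      show ⟪V y.fst + P y.snd, V y.fst + P y.snd⟫ + ⟪W y.snd, W y.snd⟫ = ⟪y.fst, y.fst⟫ + ⟪y.snd, y.snd⟫
      have e1 : ⟪V y.fst + P y.snd, V y.fst + P y.snd⟫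
          = ⟪V y.fst, V y.fst⟫ + ⟪P y.snd, P y.snd⟫ := by
        have hz1 := hinnerWP y.fst y.snd
        have hz2 : ⟪P y.snd, V y.fst⟫ = 0 := by
          rw [← inner_conj_symm, hz1, map_zero]
        rw [inner_add_add_self, hz1, hz2]
        ring
      rw [e1, aux_inner V hV]
      have e2 : ⟪P y.snd, P y.snd⟫ + ⟪W y.snd, W y.snd⟫ = ⟪y.snd, y.snd⟫ := by
        have h1 : ⟪P y.snd, P y.snd⟫ = ⟪y.snd, P y.snd⟫ := by
          nth_rewrite 1 [hP]
          simp only [sub_apply, ContinuousLinearMap.id_apply, comp_apply, inner_sub_left]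
          rw [hinnerWP (W y.snd) y.snd, sub_zero]
        have h2 : ⟪W y.snd, W y.snd⟫ = ⟪y.snd, V (W y.snd)⟫ :=
          adjoint_inner_left V (W y.snd) y.snd
        rw [h1, h2, ← inner_add_right]
        congr 1
        simp [hP]
      rw [add_assoc, e2]
    have h2 : ‖U y‖ = Real.sqrt (RCLike.re ⟪U y, U y⟫) := norm_eq_sqrt_re_inner _
    rw [h2, key, ← norm_eq_sqrt_re_inner]
  · -- surjectivity
    intro z
    refine ⟨(WithLp.equiv 2 (H × H)).symm (W z.fst, V z.snd + P z.fst), ?_⟩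
    have hPV : ∀ x : H, P (V x) = 0 := by
      intro x; simp [hP, hWV x]
    have hWP : ∀ x : H, W (P x) = 0 := by
      intro x; simp [hP, map_sub, hWV (W x)]
    have hPP : ∀ x : H, P (P x) = P x := by
      intro x; simp [hP, map_sub, hWV (W x)]
    have : U ((WithLp.equiv 2 (H × H)).symm (W z.fst, V z.snd + P z.fst))
        = (WithLp.equiv 2 (H × H)).symm
          (V (W z.fst) + P (V z.snd + P z.fst), W (V z.snd + P z.fst)) := rfl
    rw [this]
    have hfst : V (W z.fst) + P (V z.snd + P z.fst) = z.fst := by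
      rw [map_add, hPV, hPP, zero_add]
      simp [hP]
    have hsnd : W (V z.snd + P z.fst) = z.snd := by
      rw [map_add, hWV, hWP, add_zero]
    rw [hfst, hsnd]
    exact (WithLp.equiv 2 (H × H)).symm_apply_apply z
  · -- intertwining
    ext x
    show (WithLp.equiv 2 (H × H)).symm (V x + P 0, W 0)
        = (WithLp.equiv 2 (H × H)).symm (V x, 0)
    simp
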